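/- Let α1, α2 ∈ (0,1] with γ := α1 + α2 satisfying 1 < γ ≤ 2, and βi := √(αi(1−αi)). Then the real symmetric 4×4 matrix T2 = (1/(2γ))·[[0, 0, 0, 0], [0, 1, β1β2γ/(α1α2), (γ−1)β1/α1], [0, β1β2γ/(α1α2), 1, (γ−1)β2/α2], [0, (γ−1)β1/α1, (γ−1)β2/α2, 2(γ−1)]] is positive semidefinite. -/

import Mathlib

open Matrix ComplexOrder

noncomputable section

set_option maxHeartbeats 1000000 in
/-- The matrix `T2` from the sufficiency proof is positive semidefinite. -/
theorem T2_posSemidef (α1 α2 γ β1 β2 : ℝ)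
    (hα1 : α1 ∈ Set.Ioc (0:ℝ) 1) (hα2 : α2 ∈ Set.Ioc (0:ℝ) 1)
    (hγ : γ = α1 + α2) (hγ1 : 1 < γ) (hγ2 : γ ≤ 2)
    (hβ1 : β1 = Real.sqrt (α1 * (1 - α1))) (hβ2 : β2 = Real.sqrt (α2 * (1 - α2))) :
    (((1 / (2 * γ)) •
      !![0, 0, 0, 0;
         0, 1, β1 * β2 * γ / (α1 * α2), (γ - 1) * β1 / α1;
         0, β1 * β2 * γ / (α1 * α2), 1, (γ - 1) * β2 / α2;
         0, (γ - 1) * β1 / α1, (γ - 1) * β2 / α2, 2 * (γ - 1)]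
      : Matrix (Fin 4) (Fin 4) ℝ).map Complex.ofReal).PosSemidef := by
  obtain ⟨ha0, ha1⟩ := hα1
  obtain ⟨hb0, hb1⟩ := hα2
  have hγ0 : (0:ℝ) < γ := by linarith
  have hsq1 : β1 ^ 2 = α1 * (1 - α1) := by
    rw [hβ1, Real.sq_sqrt]; nlinarith
  have hsq2 : β2 ^ 2 = α2 * (1 - α2) := by
    rw [hβ2, Real.sq_sqrt]; nlinarith
  have hJ : 0 < γ ^ 2 - (γ + 1) * (α1 * α2) := by
    nlinarith [sq_nonneg (α1 - α2)]
  have hK : 0 < (γ - 1) * (γ ^ 2 - (γ + 1) * (α1 * α2)) := by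
    apply mul_pos (by linarith) hJ
  set K : ℝ := (γ - 1) * (γ ^ 2 - (γ + 1) * (α1 * α2)) with hKdef
  have key : ((1 / (2 * γ)) •
      !![0, 0, 0, 0;
         0, 1, β1 * β2 * γ / (α1 * α2), (γ - 1) * β1 / α1;
         0, β1 * β2 * γ / (α1 * α2), 1, (γ - 1) * β2 / α2;
         0, (γ - 1) * β1 / α1, (γ - 1) * β2 / α2, 2 * (γ - 1)]
      : Matrix (Fin 4) (Fin 4) ℝ) =
      !![1, 0, 0, 0;
         0, 1, 0, 0;
         0, β1 * β2 * γ / (α1 * α2), 1, 0;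
         0, (γ - 1) * β1 / α1, (γ - 1) * β2 * (α1 * γ - α2) / K, 1] *
      Matrix.diagonal ![0, 1 / (2 * γ), K / (2 * γ * (α1 * α2)),
         (γ - 1) ^ 2 / (2 * K)] *
      !![1, 0, 0, 0;
         0, 1, 0, 0;
         0, β1 * β2 * γ / (α1 * α2), 1, 0;
         0, (γ - 1) * β1 / α1, (γ - 1) * β2 * (α1 * γ - α2) / K, 1]ᵀ := by
    have ha0' : α1 ≠ 0 := ne_of_gt ha0
    have hb0' : α2 ≠ 0 := ne_of_gt hb0
    have hγ0' : γ ≠ 0 := ne_of_gt hγ0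
    have hK' : K ≠ 0 := ne_of_gt hK
    have hJ' : γ ^ 2 - α1 * α2 * (γ + 1) ≠ 0 := ne_of_gt (by linarith)
    subst hγ
    ext i j
    fin_cases i <;> fin_cases j <;>
      simp [Matrix.mul_apply, Fin.sum_univ_four, Matrix.diagonal_apply, Matrix.vecMul, Matrix.vecHead, Matrix.vecTail, dotProduct]
    all_goals try rw [hKdef]
    all_goals field_simp
    all_goals try exact Or.inl (by ring)
    all_goals ring_nf
    all_goals try rw [hsq1]
    all_goals try rw [hsq2]
    all_goals try ring
  rw [key]
  have hmap : ∀ (A B : Matrix (Fin 4) (Fin 4) ℝ),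
      (A * B).map Complex.ofReal = A.map Complex.ofReal * B.map Complex.ofReal :=
    fun A B => Matrix.map_mul (f := Complex.ofRealHom)
  rw [hmap, hmap]
  rw [show (Matrix.diagonal ![0, 1 / (2 * γ), K / (2 * γ * (α1 * α2)),
      (γ - 1) ^ 2 / (2 * K)]).map Complex.ofReal
      = Matrix.diagonal (fun i => ((![0, 1 / (2 * γ), K / (2 * γ * (α1 * α2)),
      (γ - 1) ^ 2 / (2 * K)] i : ℝ) : ℂ)) from Matrix.diagonal_map (by simp)]
  have htr : ∀ (A : Matrix (Fin 4) (Fin 4) ℝ),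
      (Aᵀ).map Complex.ofReal = (A.map Complex.ofReal)ᴴ := by
    intro A
    ext i j
    simp [Matrix.conjTranspose_apply, Matrix.map_apply, Complex.conj_ofReal]
  rw [htr]
  refine Matrix.PosSemidef.mul_mul_conjTranspose_same ?_ _
  refine Matrix.PosSemidef.diagonal fun i => Complex.zero_le_real.2 ?_
  fin_cases i <;> simp <;> positivity
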